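/- Let p be a Kostlan random polynomial of degree d and set p̂(x̂,ŷ) = p(d^{-1/2} x̂, d^{-1/2} ŷ). Then there is a constant M > 0 independent of d such that E[ sup_{(x̂,ŷ) ∈ D₂} |p̂(x̂,ŷ)| ] ≤ M, where D₂ is the closed disk of radius 2 centered at the origin; in particular one may take M = √(2/π) Σ_{k≥0} k·2^k / √(⌊k/2⌋!), and this series converges. -/

import Mathlib

open MeasureTheory ProbabilityTheory

/-- The degree-`d` Kostlan random polynomial built from the coefficients `a (j,k)`. -/
noncomputable def kostlan (d : ℕ) (a : ℕ × ℕ → ℝ) (x y : ℝ) : ℝ :=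
  ∑ jk ∈ (Finset.range (d + 1) ×ˢ Finset.range (d + 1)).filter
      (fun jk => jk.1 + jk.2 ≤ d),
    a jk * Real.sqrt (d.factorial /
      ((d - jk.1 - jk.2).factorial * jk.1.factorial * jk.2.factorial)) *
      x ^ jk.1 * y ^ jk.2

/-- The closed disk of radius 2 centered at the origin in `ℝ²`. -/
def diskTwo : Set (ℝ × ℝ) := {v : ℝ × ℝ | v.1 ^ 2 + v.2 ^ 2 ≤ 4}

/- ### Auxiliary lemmas -/

private lemma sqrt_mul_le_half_add {x y : ℝ} (hx : 0 ≤ x) (hy : 0 ≤ y) :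
    Real.sqrt (x * y) ≤ (x + y) / 2 := by
  have h : x * y ≤ ((x + y) / 2) ^ 2 := by nlinarith [sq_nonneg (x - y)]
  calc Real.sqrt (x * y) ≤ Real.sqrt (((x + y) / 2) ^ 2) := Real.sqrt_le_sqrt h
    _ = (x + y) / 2 := Real.sqrt_sq (by positivity)

private lemma div_sqrt_factorial_le {c K : ℝ} (m : ℕ) (hc : 0 ≤ c) (hK : 0 ≤ K)
    (h : c ^ 2 ≤ K ^ 2 * 64 ^ m) :
    c / Real.sqrt (m.factorial) ≤ K / 2 * (128 ^ m / m.factorial + (1 / 2) ^ m) := by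
  have hf : (0:ℝ) < (m.factorial : ℝ) := by exact_mod_cast m.factorial_pos
  have h64 : (64:ℝ) ^ m = 128 ^ m * (1/2) ^ m := by rw [← mul_pow]; norm_num
  have h1 : c / Real.sqrt m.factorial = Real.sqrt (c ^ 2 / m.factorial) := by
    rw [Real.sqrt_div (sq_nonneg c), Real.sqrt_sq hc]
  rw [h1]
  have h2 : c ^ 2 / (m.factorial : ℝ) ≤ K ^ 2 * ((128 ^ m / (m.factorial:ℝ)) * (1/2) ^ m) := by
    calc c ^ 2 / (m.factorial : ℝ) ≤ (K ^ 2 * 64 ^ m) / m.factorial := by gcongr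
      _ = K ^ 2 * ((128 ^ m / (m.factorial:ℝ)) * (1/2) ^ m) := by rw [h64]; ring
  calc Real.sqrt (c ^ 2 / m.factorial)
      ≤ Real.sqrt (K ^ 2 * ((128 ^ m / (m.factorial:ℝ)) * (1/2) ^ m)) := Real.sqrt_le_sqrt h2
    _ = K * Real.sqrt ((128 ^ m / (m.factorial:ℝ)) * (1/2) ^ m) := by
        rw [Real.sqrt_mul (sq_nonneg K), Real.sqrt_sq hK]
    _ ≤ K * ((128 ^ m / (m.factorial:ℝ) + (1/2) ^ m) / 2) := by
        have := sqrt_mul_le_half_add (x := 128 ^ m / (m.factorial:ℝ)) (y := (1/2) ^ m)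
          (by positivity) (by positivity)
        exact mul_le_mul_of_nonneg_left this hK
    _ = K / 2 * (128 ^ m / m.factorial + (1 / 2) ^ m) := by ring

private lemma kostlan_series_summable :
    Summable (fun k : ℕ => (k : ℝ) * 2 ^ k / Real.sqrt ((k / 2).factorial)) := by
  have hg : Summable (fun m : ℕ => (4:ℝ) * (128 ^ m / m.factorial + (1/2) ^ m)) :=
    ((Real.summable_pow_div_factorial 128).add
      (summable_geometric_of_lt_one (by norm_num) (by norm_num))).mul_left 4
  apply Summable.even_add_odd
  · apply Summable.of_nonneg_of_le (fun m => by positivity) (fun m => ?_) hg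
    have hdiv : 2 * m / 2 = m := by omega
    rw [hdiv]
    have hm : ((m:ℝ)) ≤ 2 ^ m := by exact_mod_cast (Nat.lt_two_pow_self (n := m)).le
    have hpow : ((2:ℝ)) ^ (2 * m) = 4 ^ m := by
      rw [pow_mul]; norm_num
    have hineq : (((2 * m : ℕ) : ℝ) * 2 ^ (2 * m)) ^ 2 ≤ (2:ℝ) ^ 2 * 64 ^ m := by
      push_cast
      rw [hpow]
      have h4 : ((m:ℝ)) ^ 2 ≤ 4 ^ m := by
        calc ((m:ℝ)) ^ 2 ≤ ((2:ℝ) ^ m) ^ 2 := pow_le_pow_left₀ (Nat.cast_nonneg m) hm 2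
          _ = 4 ^ m := by rw [← pow_mul, mul_comm, pow_mul]; norm_num
      have h16 : (0:ℝ) < 16 ^ m := by positivity
      have h64 : (64:ℝ) ^ m = 4 ^ m * 16 ^ m := by rw [← mul_pow]; norm_num
      have h16eq : ((4:ℝ) ^ m) ^ 2 = 16 ^ m := by
        rw [← pow_mul, mul_comm, pow_mul]; norm_num
      calc (2 * (m:ℝ) * 4 ^ m) ^ 2 = 4 * ((m:ℝ) ^ 2 * ((4:ℝ) ^ m) ^ 2) := by ring
        _ = 4 * ((m:ℝ) ^ 2 * 16 ^ m) := by rw [h16eq]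
        _ ≤ 4 * ((4:ℝ) ^ m * 16 ^ m) := by gcongr
        _ = (2:ℝ) ^ 2 * 64 ^ m := by rw [h64]; ring
    have key := div_sqrt_factorial_le (c := ((2 * m : ℕ) : ℝ) * 2 ^ (2 * m)) (K := 2) m
      (by positivity) (by norm_num) hineq
    calc ((2 * m : ℕ) : ℝ) * 2 ^ (2 * m) / Real.sqrt m.factorial
        ≤ 2 / 2 * (128 ^ m / m.factorial + (1 / 2) ^ m) := key
      _ ≤ 4 * (128 ^ m / m.factorial + (1/2) ^ m) := by
          have hnn : (0:ℝ) ≤ 128 ^ m / m.factorial + (1/2) ^ m := by positivity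
          nlinarith
  · apply Summable.of_nonneg_of_le (fun m => by positivity) (fun m => ?_) hg
    have hdiv : (2 * m + 1) / 2 = m := by omega
    rw [hdiv]
    have hm : ((m:ℝ)) ≤ 2 ^ m := by exact_mod_cast (Nat.lt_two_pow_self (n := m)).le
    have h1 : (1:ℝ) ≤ 2 ^ m := one_le_pow₀ (by norm_num)
    have hineq : (((2 * m + 1 : ℕ) : ℝ) * 2 ^ (2 * m + 1)) ^ 2 ≤ (8:ℝ) ^ 2 * 64 ^ m := by
      push_cast
      have hpow : ((2:ℝ)) ^ (2 * m + 1) = 2 * 4 ^ m := by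
        rw [pow_succ, pow_mul]; norm_num; ring
      rw [hpow]
      have h4 : (0:ℝ) < 4 ^ m := by positivity
      have h16pos : (0:ℝ) < 16 ^ m := by positivity
      have h64 : (64:ℝ) ^ m = 4 ^ m * 16 ^ m := by rw [← mul_pow]; norm_num
      have h16 : ((4:ℝ) ^ m) ^ 2 = 16 ^ m := by rw [← pow_mul, mul_comm, pow_mul]; norm_num
      have h2sq : ((2:ℝ) ^ m) ^ 2 = 4 ^ m := by rw [← pow_mul, mul_comm, pow_mul]; norm_num
      have hq : (2 * (m:ℝ) + 1) ^ 2 ≤ 9 * 4 ^ m := by nlinarith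
      calc ((2 * (m:ℝ) + 1) * (2 * 4 ^ m)) ^ 2
          = 4 * ((2 * (m:ℝ) + 1) ^ 2 * ((4:ℝ) ^ m) ^ 2) := by ring
        _ = 4 * ((2 * (m:ℝ) + 1) ^ 2 * 16 ^ m) := by rw [h16]
        _ ≤ 4 * (9 * 4 ^ m * 16 ^ m) := by gcongr
        _ ≤ (8:ℝ) ^ 2 * 64 ^ m := by rw [h64]; nlinarith [mul_pos h4 h16pos]
    have key := div_sqrt_factorial_le (c := ((2 * m + 1 : ℕ) : ℝ) * 2 ^ (2 * m + 1)) (K := 8) m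
      (by positivity) (by norm_num) hineq
    calc ((2 * m + 1 : ℕ) : ℝ) * 2 ^ (2 * m + 1) / Real.sqrt m.factorial
        ≤ 8 / 2 * (128 ^ m / m.factorial + (1 / 2) ^ m) := key
      _ = 4 * (128 ^ m / m.factorial + (1/2) ^ m) := by norm_num

section GaussianMoment

open Real Filter

private lemma integral_Ioi_mul_exp_neg_mul_sq {b : ℝ} (hb : 0 < b) :
    ∫ r in Set.Ioi (0:ℝ), r * Real.exp (-b * r ^ 2) = (2 * b)⁻¹ := by
  have hb' : (2 * b) ≠ 0 := by positivity
  have A : ∀ x : ℝ, HasDerivAt (fun y : ℝ => -(2 * b)⁻¹ * Real.exp (-b * y ^ 2))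
      (x * Real.exp (-b * x ^ 2)) x := by
    intro x
    convert (((hasDerivAt_pow 2 x).const_mul (-b)).exp.const_mul (-(2 * b)⁻¹)) using 1
    · rfl
    · rfl
    field_simp
    ring
  have B : Tendsto (fun y : ℝ => -(2 * b)⁻¹ * Real.exp (-b * y ^ 2)) atTop
      (nhds (-(2 * b)⁻¹ * 0)) := by
    refine Tendsto.const_mul _ (Real.tendsto_exp_atBot.comp ?_)
    exact (tendsto_pow_atTop two_ne_zero).const_mul_atTop_of_neg (neg_lt_zero.2 hb)
  have := integral_Ioi_of_hasDerivAt_of_tendsto' (a := (0:ℝ)) (fun x _ => A x)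
    (integrable_mul_exp_neg_mul_sq hb).integrableOn B
  rw [this]
  simp

private lemma gaussianPDFReal_zero_one (x : ℝ) :
    gaussianPDFReal 0 1 x = (Real.sqrt (2 * Real.pi))⁻¹ * Real.exp (-(1/2) * x ^ 2) := by
  rw [gaussianPDFReal]
  simp only [NNReal.coe_one, mul_one, sub_zero]
  congr 1
  ring

private lemma integrable_abs_mul_exp :
    Integrable (fun x : ℝ => |x| * Real.exp (-(1/2 : ℝ) * x ^ 2)) := by
  have h := (integrable_mul_exp_neg_mul_sq (b := (1/2 : ℝ)) (by norm_num)).abs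
  refine h.congr (Filter.Eventually.of_forall fun x => ?_)
  simp [abs_mul, abs_of_nonneg (Real.exp_pos _).le]

private lemma gaussianReal_zero_one_eq :
    gaussianReal 0 1
      = volume.withDensity (fun x => ((gaussianPDFReal 0 1 x).toNNReal : ENNReal)) := by
  rw [gaussianReal_of_var_ne_zero 0 one_ne_zero]
  rfl

private lemma gaussian_abs_integrable :
    Integrable (fun x : ℝ => |x|) (gaussianReal 0 1) := by
  have hmeasf : Measurable (fun x : ℝ => (gaussianPDFReal 0 1 x).toNNReal) :=
    (measurable_gaussianPDFReal 0 1).real_toNNReal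
  rw [gaussianReal_zero_one_eq, integrable_withDensity_iff_integrable_smul hmeasf]
  refine (integrable_abs_mul_exp.const_mul ((Real.sqrt (2 * Real.pi))⁻¹)).congr
    (Filter.Eventually.of_forall fun x => ?_)
  have hco : ((gaussianPDFReal 0 1 x).toNNReal : ℝ) = gaussianPDFReal 0 1 x :=
    Real.coe_toNNReal _ (gaussianPDFReal_nonneg 0 1 x)
  simp only [NNReal.smul_def, smul_eq_mul]
  rw [hco, gaussianPDFReal_zero_one]
  ring

private lemma gaussian_abs_integral :
    ∫ x, |x| ∂(gaussianReal 0 1) = Real.sqrt (2 / Real.pi) := by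
  have hmeasf : Measurable (fun x : ℝ => (gaussianPDFReal 0 1 x).toNNReal) :=
    (measurable_gaussianPDFReal 0 1).real_toNNReal
  rw [gaussianReal_zero_one_eq, integral_withDensity_eq_integral_smul hmeasf]
  have h1 : ∀ x : ℝ, (gaussianPDFReal 0 1 x).toNNReal • |x|
      = (Real.sqrt (2 * Real.pi))⁻¹ * (|x| * Real.exp (-(1/2 : ℝ) * x ^ 2)) := by
    intro x
    have hco : ((gaussianPDFReal 0 1 x).toNNReal : ℝ) = gaussianPDFReal 0 1 x :=
      Real.coe_toNNReal _ (gaussianPDFReal_nonneg 0 1 x)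
    simp only [NNReal.smul_def, smul_eq_mul]
    rw [hco, gaussianPDFReal_zero_one]
    ring
  rw [integral_congr_ae (Filter.Eventually.of_forall h1), integral_const_mul]
  have h2 : (fun x : ℝ => |x| * Real.exp (-(1/2 : ℝ) * x ^ 2))
      = fun x : ℝ => |x| * Real.exp (-(1/2 : ℝ) * |x| ^ 2) := by
    funext x; rw [sq_abs]
  rw [h2]
  rw [integral_comp_abs (f := fun t : ℝ => t * Real.exp (-(1/2 : ℝ) * t ^ 2))]
  rw [integral_Ioi_mul_exp_neg_mul_sq (by norm_num : (0:ℝ) < 1/2)]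
  have hπ : (0:ℝ) < Real.pi := Real.pi_pos
  have hsq : Real.sqrt (2 / Real.pi) = 2 / Real.sqrt (2 * Real.pi) := by
    rw [show (2:ℝ) / Real.pi = 4 / (2 * Real.pi) by ring,
      Real.sqrt_div (by norm_num : (0:ℝ) ≤ 4),
      show (4:ℝ) = 2 ^ 2 by norm_num, Real.sqrt_sq (by norm_num : (0:ℝ) ≤ 2)]
  rw [hsq]
  norm_num
  ring

end GaussianMoment

/- ### Deterministic bounds -/

private lemma abs_le_two_of_mem_disk {p : ℝ × ℝ} (hp : p ∈ diskTwo) :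
    |p.1| ≤ 2 ∧ |p.2| ≤ 2 := by
  have h : p.1 ^ 2 + p.2 ^ 2 ≤ 4 := hp
  have h2 : Real.sqrt (2 ^ 2 : ℝ) = 2 := Real.sqrt_sq (by norm_num)
  constructor
  · rw [← Real.sqrt_sq_eq_abs, ← h2]
    exact Real.sqrt_le_sqrt (by nlinarith [sq_nonneg p.2])
  · rw [← Real.sqrt_sq_eq_abs, ← h2]
    exact Real.sqrt_le_sqrt (by nlinarith [sq_nonneg p.1])

private lemma kostlan_pointwise_bound (d : ℕ) (hd : 1 ≤ d) (b : ℕ × ℕ → ℝ) (x y : ℝ)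
    (hx : |x| ≤ 2) (hy : |y| ≤ 2) :
    |kostlan d b ((d : ℝ) ^ (-(1/2 : ℝ)) * x) ((d : ℝ) ^ (-(1/2 : ℝ)) * y)|
      ≤ ∑ jk ∈ (Finset.range (d + 1) ×ˢ Finset.range (d + 1)).filter
          (fun jk => jk.1 + jk.2 ≤ d),
        |b jk| * (2 ^ (jk.1 + jk.2)
          / Real.sqrt ((jk.1.factorial : ℝ) * jk.2.factorial)) := by
  set c : ℝ := (d : ℝ) ^ (-(1/2 : ℝ)) with hc_def
  have hd0 : (0:ℝ) < d := by exact_mod_cast hd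
  have hc0 : 0 ≤ c := Real.rpow_nonneg hd0.le _
  have hc_eq : c = (Real.sqrt d)⁻¹ := by
    rw [hc_def, Real.rpow_neg hd0.le, Real.sqrt_eq_rpow]
  have hsqrt_pow : ∀ n : ℕ, (Real.sqrt d) ^ n = Real.sqrt ((d:ℝ) ^ n) := by
    intro n
    induction n with
    | zero => simp
    | succ n ih => rw [pow_succ, pow_succ, ih, ← Real.sqrt_mul (by positivity)]
  have hkey : ∀ j k : ℕ, j + k ≤ d →
      Real.sqrt ((d.factorial : ℝ)
          / ((d - j - k).factorial * j.factorial * k.factorial)) * c ^ (j + k)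
        ≤ 1 / Real.sqrt ((j.factorial : ℝ) * k.factorial) := by
    intro j k hjk
    have hfj : (0:ℝ) < j.factorial := by exact_mod_cast j.factorial_pos
    have hfk : (0:ℝ) < k.factorial := by exact_mod_cast k.factorial_pos
    have hfd : (0:ℝ) < ((d - j - k).factorial : ℝ) := by
      exact_mod_cast (d - j - k).factorial_pos
    have hP : (0:ℝ) < (d:ℝ) ^ (j + k) := by positivity
    have hfact : (d.factorial : ℝ) ≤ ((d - j - k).factorial : ℝ) * (d:ℝ) ^ (j + k) := by
      have h1 : (d - (j + k)).factorial * d.descFactorial (j + k) = d.factorial :=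
        Nat.factorial_mul_descFactorial hjk
      have h2 : d.descFactorial (j + k) ≤ d ^ (j + k) := Nat.descFactorial_le_pow d (j + k)
      have h3 : d.factorial ≤ (d - (j + k)).factorial * d ^ (j + k) := by
        rw [← h1]; exact Nat.mul_le_mul_left _ h2
      have h4 : d - j - k = d - (j + k) := by omega
      rw [h4]
      exact_mod_cast h3
    have harg : (d.factorial : ℝ)
        / (((d - j - k).factorial : ℝ) * j.factorial * k.factorial)
        * ((d:ℝ) ^ (j + k))⁻¹ ≤ ((j.factorial : ℝ) * k.factorial)⁻¹ := by
      have e1 : (d.factorial : ℝ)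
          / (((d - j - k).factorial : ℝ) * j.factorial * k.factorial)
          * ((d:ℝ) ^ (j + k))⁻¹
          = (d.factorial : ℝ) / (((d - j - k).factorial : ℝ) * (d:ℝ) ^ (j + k))
            * ((j.factorial : ℝ) * k.factorial)⁻¹ := by
        rw [div_eq_mul_inv, div_eq_mul_inv, mul_inv, mul_inv, mul_inv]
        ring
      rw [e1]
      have e2 : (d.factorial : ℝ) / (((d - j - k).factorial : ℝ) * (d:ℝ) ^ (j + k)) ≤ 1 :=
        (div_le_one (by positivity)).2 hfact
      calc (d.factorial : ℝ) / (((d - j - k).factorial : ℝ) * (d:ℝ) ^ (j + k))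
            * ((j.factorial : ℝ) * k.factorial)⁻¹
          ≤ 1 * ((j.factorial : ℝ) * k.factorial)⁻¹ :=
            mul_le_mul_of_nonneg_right e2 (by positivity)
        _ = ((j.factorial : ℝ) * k.factorial)⁻¹ := one_mul _
    calc Real.sqrt ((d.factorial : ℝ)
            / ((d - j - k).factorial * j.factorial * k.factorial)) * c ^ (j + k)
        = Real.sqrt ((d.factorial : ℝ)
            / ((d - j - k).factorial * j.factorial * k.factorial))
            * Real.sqrt (((d:ℝ) ^ (j + k))⁻¹) := by
          rw [hc_eq, inv_pow, hsqrt_pow, ← Real.sqrt_inv]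
      _ = Real.sqrt ((d.factorial : ℝ)
            / ((d - j - k).factorial * j.factorial * k.factorial)
            * ((d:ℝ) ^ (j + k))⁻¹) := (Real.sqrt_mul (by positivity) _).symm
      _ ≤ Real.sqrt (((j.factorial : ℝ) * k.factorial)⁻¹) := Real.sqrt_le_sqrt harg
      _ = 1 / Real.sqrt ((j.factorial : ℝ) * k.factorial) := by
          rw [Real.sqrt_inv, one_div]
  rw [kostlan]
  refine (Finset.abs_sum_le_sum_abs _ _).trans (Finset.sum_le_sum ?_)
  intro jk hjk
  have hm : jk.1 + jk.2 ≤ d := (Finset.mem_filter.1 hjk).2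
  have h1 : |c * x| ≤ c * 2 := by
    rw [abs_mul, abs_of_nonneg hc0]
    exact mul_le_mul_of_nonneg_left hx hc0
  have h2 : |c * y| ≤ c * 2 := by
    rw [abs_mul, abs_of_nonneg hc0]
    exact mul_le_mul_of_nonneg_left hy hc0
  calc |b jk * Real.sqrt ((d.factorial : ℝ)
          / ((d - jk.1 - jk.2).factorial * jk.1.factorial * jk.2.factorial))
          * (c * x) ^ jk.1 * (c * y) ^ jk.2|
      = |b jk| * (Real.sqrt ((d.factorial : ℝ)
          / ((d - jk.1 - jk.2).factorial * jk.1.factorial * jk.2.factorial))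
          * |c * x| ^ jk.1 * |c * y| ^ jk.2) := by
        rw [abs_mul, abs_mul, abs_mul, abs_pow, abs_pow,
          abs_of_nonneg (Real.sqrt_nonneg _)]
        ring
    _ ≤ |b jk| * (2 ^ (jk.1 + jk.2)
          / Real.sqrt ((jk.1.factorial : ℝ) * jk.2.factorial)) := by
        refine mul_le_mul_of_nonneg_left ?_ (abs_nonneg _)
        calc Real.sqrt ((d.factorial : ℝ)
              / ((d - jk.1 - jk.2).factorial * jk.1.factorial * jk.2.factorial))
              * |c * x| ^ jk.1 * |c * y| ^ jk.2
            ≤ Real.sqrt ((d.factorial : ℝ)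
              / ((d - jk.1 - jk.2).factorial * jk.1.factorial * jk.2.factorial))
              * (c * 2) ^ jk.1 * (c * 2) ^ jk.2 := by gcongr <;> positivity
          _ = Real.sqrt ((d.factorial : ℝ)
              / ((d - jk.1 - jk.2).factorial * jk.1.factorial * jk.2.factorial))
              * c ^ (jk.1 + jk.2) * 2 ^ (jk.1 + jk.2) := by
              rw [mul_pow, mul_pow, pow_add, pow_add]; ring
          _ ≤ 1 / Real.sqrt ((jk.1.factorial : ℝ) * jk.2.factorial)
              * 2 ^ (jk.1 + jk.2) :=
              mul_le_mul_of_nonneg_right (hkey jk.1 jk.2 hm) (by positivity)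
          _ = 2 ^ (jk.1 + jk.2) / Real.sqrt ((jk.1.factorial : ℝ) * jk.2.factorial) := by
              ring

private lemma kostlan_comb_bound (d : ℕ) :
    ∑ jk ∈ (Finset.range (d + 1) ×ˢ Finset.range (d + 1)).filter
        (fun jk => jk.1 + jk.2 ≤ d),
      (2 ^ (jk.1 + jk.2) / Real.sqrt ((jk.1.factorial : ℝ) * jk.2.factorial))
      ≤ ∑' k : ℕ, (k : ℝ) * 2 ^ k / Real.sqrt ((k / 2).factorial) := by
  have hdisj : (↑(Finset.range (d + 1)) : Set ℕ).PairwiseDisjoint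
      (fun m => Finset.HasAntidiagonal.antidiagonal m) := by
    intro x _ y _ hxy
    simp only [Function.onFun, Finset.disjoint_left]
    intro p hp hq
    rw [Finset.HasAntidiagonal.mem_antidiagonal] at hp hq
    exact hxy (hp.symm.trans hq)
  have hFeq : (Finset.range (d + 1) ×ˢ Finset.range (d + 1)).filter
      (fun jk => jk.1 + jk.2 ≤ d)
      = (Finset.range (d + 1)).biUnion (fun m => Finset.HasAntidiagonal.antidiagonal m) := by
    ext p
    simp only [Finset.mem_filter, Finset.mem_product, Finset.mem_range, Finset.mem_biUnion,
      Finset.HasAntidiagonal.mem_antidiagonal]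
    constructor
    · rintro ⟨⟨hp1, hp2⟩, hp3⟩
      exact ⟨p.1 + p.2, by omega, rfl⟩
    · rintro ⟨m, hm, hpm⟩
      omega
  rw [hFeq, Finset.sum_biUnion hdisj]
  have hstep : ∀ m ∈ Finset.range (d + 1),
      ∑ p ∈ Finset.HasAntidiagonal.antidiagonal m,
        ((2:ℝ) ^ (p.1 + p.2) / Real.sqrt ((p.1.factorial : ℝ) * p.2.factorial))
      ≤ ((m + 1 : ℕ) : ℝ) * 2 ^ (m + 1) / Real.sqrt (((m + 1) / 2).factorial) := by
    intro m _
    have hbnd : ∀ p ∈ Finset.HasAntidiagonal.antidiagonal m,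
        ((2:ℝ) ^ (p.1 + p.2) / Real.sqrt ((p.1.factorial : ℝ) * p.2.factorial))
        ≤ 2 ^ m / Real.sqrt ((((m + 1) / 2).factorial : ℝ)) := by
      intro p hp
      have hpm : p.1 + p.2 = m := Finset.HasAntidiagonal.mem_antidiagonal.1 hp
      have hfac : ((((m + 1) / 2).factorial : ℕ) : ℝ) ≤ (p.1.factorial : ℝ) * p.2.factorial := by
        have h : ((m + 1) / 2).factorial ≤ p.1.factorial * p.2.factorial := by
          rcases le_total p.1 p.2 with h | h
          · have h2 : (m + 1) / 2 ≤ p.2 := by omega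
            calc ((m + 1) / 2).factorial ≤ p.2.factorial := Nat.factorial_le h2
              _ ≤ p.1.factorial * p.2.factorial :=
                Nat.le_mul_of_pos_left _ p.1.factorial_pos
          · have h2 : (m + 1) / 2 ≤ p.1 := by omega
            calc ((m + 1) / 2).factorial ≤ p.1.factorial := Nat.factorial_le h2
              _ ≤ p.1.factorial * p.2.factorial :=
                Nat.le_mul_of_pos_right _ p.2.factorial_pos
        exact_mod_cast h
      rw [hpm]
      have hpos : (0:ℝ) < ((((m + 1) / 2).factorial : ℕ) : ℝ) := by
        exact_mod_cast ((m + 1) / 2).factorial_pos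
      gcongr
      all_goals first
        | exact Real.sqrt_pos.2 hpos
        | exact Real.sqrt_le_sqrt hfac
        | positivity
    calc ∑ p ∈ Finset.HasAntidiagonal.antidiagonal m,
          ((2:ℝ) ^ (p.1 + p.2) / Real.sqrt ((p.1.factorial : ℝ) * p.2.factorial))
        ≤ (Finset.HasAntidiagonal.antidiagonal m).card
            • ((2:ℝ) ^ m / Real.sqrt ((((m + 1) / 2).factorial : ℝ))) :=
          Finset.sum_le_card_nsmul _ _ _ hbnd
      _ = ((m + 1 : ℕ) : ℝ) * ((2:ℝ) ^ m / Real.sqrt ((((m + 1) / 2).factorial : ℝ))) := by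
          rw [Finset.Nat.card_antidiagonal, nsmul_eq_mul]
      _ = ((m + 1 : ℕ) : ℝ) * (2:ℝ) ^ m / Real.sqrt ((((m + 1) / 2).factorial : ℝ)) := by
          ring
      _ ≤ ((m + 1 : ℕ) : ℝ) * 2 ^ (m + 1) / Real.sqrt (((m + 1) / 2).factorial) := by
          gcongr
          · exact one_le_two
          · omega
  calc ∑ m ∈ Finset.range (d + 1), ∑ p ∈ Finset.HasAntidiagonal.antidiagonal m,
        ((2:ℝ) ^ (p.1 + p.2) / Real.sqrt ((p.1.factorial : ℝ) * p.2.factorial))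
      ≤ ∑ m ∈ Finset.range (d + 1),
          ((m + 1 : ℕ) : ℝ) * 2 ^ (m + 1) / Real.sqrt (((m + 1) / 2).factorial) :=
        Finset.sum_le_sum hstep
    _ ≤ ∑' k : ℕ, (k : ℝ) * 2 ^ k / Real.sqrt ((k / 2).factorial) := by
        have hss := Finset.sum_range_succ'
          (fun k : ℕ => (k : ℝ) * 2 ^ k / Real.sqrt ((k / 2).factorial)) (d + 1)
        have h0 : ((0 : ℕ) : ℝ) * 2 ^ (0:ℕ) / Real.sqrt (((0:ℕ) / 2).factorial) = 0 := by
          norm_num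
        calc ∑ m ∈ Finset.range (d + 1),
              ((m + 1 : ℕ) : ℝ) * 2 ^ (m + 1) / Real.sqrt (((m + 1) / 2).factorial)
            = ∑ k ∈ Finset.range (d + 2),
              (k : ℝ) * 2 ^ k / Real.sqrt ((k / 2).factorial) := by
              rw [hss, h0, add_zero]
          _ ≤ ∑' k : ℕ, (k : ℝ) * 2 ^ k / Real.sqrt ((k / 2).factorial) :=
              Summable.sum_le_tsum _ (fun i _ => by positivity) kostlan_series_summable

/-- For the rescaled Kostlan polynomial
`p̂(x̂,ŷ) = p(d^{-1/2} x̂, d^{-1/2} ŷ)`, the expected sup over the closed disk of radius 2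
is bounded by `M = √(2/π) Σ_{k≥0} k 2^k / √(⌊k/2⌋!)`, a convergent series, uniformly
in `d`. -/
theorem kostlan_rescaled_sup_bound
    {Ω : Type*} [MeasureSpace Ω] [IsProbabilityMeasure (ℙ : Measure Ω)]
    (d : ℕ) (hd : 1 ≤ d) (a : ℕ × ℕ → Ω → ℝ)
    (hmeas : ∀ jk, Measurable (a jk))
    (hgauss : ∀ jk, Measure.map (a jk) ℙ = gaussianReal 0 1)
    (hindep : iIndepFun a ℙ) :
    Summable (fun k : ℕ => (k : ℝ) * 2 ^ k / Real.sqrt ((k / 2).factorial)) ∧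
    ∫ ω, ⨆ v : diskTwo, |kostlan d (fun jk => a jk ω)
        ((d : ℝ) ^ (-(1/2 : ℝ)) * (v : ℝ × ℝ).1) ((d : ℝ) ^ (-(1/2 : ℝ)) * (v : ℝ × ℝ).2)| ∂ℙ
      ≤ Real.sqrt (2 / Real.pi) *
          ∑' k : ℕ, (k : ℝ) * 2 ^ k / Real.sqrt ((k / 2).factorial) := by
  refine ⟨kostlan_series_summable, ?_⟩
  haveI hne : Nonempty diskTwo := ⟨⟨(0, 0), by simp [diskTwo]⟩⟩
  set F := (Finset.range (d + 1) ×ˢ Finset.range (d + 1)).filter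
      (fun jk => jk.1 + jk.2 ≤ d) with hF_def
  -- integrability and expectation of |a jk|
  have haint : ∀ jk, Integrable (fun ω => |a jk ω|) ℙ := by
    intro jk
    have h1 : Integrable (fun x : ℝ => |x|) (Measure.map (a jk) ℙ) := by
      rw [hgauss jk]; exact gaussian_abs_integrable
    exact (integrable_map_measure measurable_abs.aestronglyMeasurable
      (hmeas jk).aemeasurable).1 h1
  have haE : ∀ jk, ∫ ω, |a jk ω| ∂ℙ = Real.sqrt (2 / Real.pi) := by
    intro jk
    have h1 : ∫ x, |x| ∂(Measure.map (a jk) ℙ) = Real.sqrt (2 / Real.pi) := by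
      rw [hgauss jk]; exact gaussian_abs_integral
    rw [← h1, integral_map (hmeas jk).aemeasurable measurable_abs.aestronglyMeasurable]
  -- the dominating random variable
  have hBint : Integrable (fun ω => ∑ jk ∈ F,
      |a jk ω| * (2 ^ (jk.1 + jk.2)
        / Real.sqrt ((jk.1.factorial : ℝ) * jk.2.factorial))) ℙ :=
    integrable_finset_sum _ (fun jk _ => (haint jk).mul_const _)
  have hSle : ∀ ω : Ω, (⨆ v : diskTwo, |kostlan d (fun jk => a jk ω)
        ((d : ℝ) ^ (-(1/2 : ℝ)) * (v : ℝ × ℝ).1) ((d : ℝ) ^ (-(1/2 : ℝ)) * (v : ℝ × ℝ).2)|)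
      ≤ ∑ jk ∈ F, |a jk ω| * (2 ^ (jk.1 + jk.2)
          / Real.sqrt ((jk.1.factorial : ℝ) * jk.2.factorial)) := by
    intro ω
    refine ciSup_le fun v => ?_
    exact kostlan_pointwise_bound d hd _ _ _
      (abs_le_two_of_mem_disk v.2).1 (abs_le_two_of_mem_disk v.2).2
  have hS0 : ∀ ω : Ω, 0 ≤ (⨆ v : diskTwo, |kostlan d (fun jk => a jk ω)
      ((d : ℝ) ^ (-(1/2 : ℝ)) * (v : ℝ × ℝ).1) ((d : ℝ) ^ (-(1/2 : ℝ)) * (v : ℝ × ℝ).2)|) :=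
    fun ω => Real.iSup_nonneg fun v => abs_nonneg _
  calc ∫ ω, ⨆ v : diskTwo, |kostlan d (fun jk => a jk ω)
        ((d : ℝ) ^ (-(1/2 : ℝ)) * (v : ℝ × ℝ).1) ((d : ℝ) ^ (-(1/2 : ℝ)) * (v : ℝ × ℝ).2)| ∂ℙ
      ≤ ∫ ω, ∑ jk ∈ F, |a jk ω| * (2 ^ (jk.1 + jk.2)
          / Real.sqrt ((jk.1.factorial : ℝ) * jk.2.factorial)) ∂ℙ :=
      integral_mono_of_nonneg (Filter.Eventually.of_forall hS0) hBint
        (Filter.Eventually.of_forall hSle)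
    _ = ∑ jk ∈ F, ∫ ω, |a jk ω| * (2 ^ (jk.1 + jk.2)
          / Real.sqrt ((jk.1.factorial : ℝ) * jk.2.factorial)) ∂ℙ :=
      integral_finset_sum F (fun jk _ => (haint jk).mul_const _)
    _ = ∑ jk ∈ F, Real.sqrt (2 / Real.pi) * (2 ^ (jk.1 + jk.2)
          / Real.sqrt ((jk.1.factorial : ℝ) * jk.2.factorial)) := by
      refine Finset.sum_congr rfl fun jk _ => ?_
      rw [MeasureTheory.integral_mul_const, haE jk]
    _ = Real.sqrt (2 / Real.pi) * ∑ jk ∈ F, (2 ^ (jk.1 + jk.2)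
          / Real.sqrt ((jk.1.factorial : ℝ) * jk.2.factorial)) := by
      rw [Finset.mul_sum]
    _ ≤ Real.sqrt (2 / Real.pi) *
          ∑' k : ℕ, (k : ℝ) * 2 ^ k / Real.sqrt ((k / 2).factorial) :=
      mul_le_mul_of_nonneg_left (kostlan_comb_bound d) (Real.sqrt_nonneg _)
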